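/- For i ≥ m with n-i even and 0 ≤ (n-i)/2 ≤ 3: c_{n,m,i} = 2^{1-i} C((n+i)/2, i) C(i, (i-m)/2) * ω_{(n-i)/2}(i,m) / Π_{d=1}^{(n-i)/2} (2d+i+m)(2d+i-m), where ω_0(i,m)=1, ω_1(i,m)=m^2, ω_2(i,m)=(m^2-i-4)^2, ω_3(i,m)=m^2 (m^2-3i-16)^2. -/

import Mathlib

set_option maxHeartbeats 1600000

noncomputable def c (n m i : ℕ) : ℝ :=
  (-1 : ℝ) ^ ((n - m) / 2) *
    ∑ s ∈ Finset.Icc ((i - m) / 2) ((n - m) / 2),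
      (-1 : ℝ) ^ s * (((n + m) / 2 + s).choose ((n - m) / 2 - s) : ℝ) *
        ((m + 2 * s).choose s : ℝ) * (2 : ℝ) ^ ((1 : ℤ) - m - 2 * s) *
        ((m + 2 * s).choose ((m + 2 * s - i) / 2) : ℝ)

open Nat in
private lemma ch (n k l : ℕ) (h : n = k + l) : (n.choose k : ℝ) = (n ! : ℝ) / ((k ! : ℝ) * (l ! : ℝ)) := by
  subst h
  rw [Nat.cast_choose ℝ (Nat.le_add_right _ _), Nat.add_sub_cancel_left]

open Nat in
private lemma fs (n : ℕ) : (((n+1)! : ℕ) : ℝ) = (n+1) * (n ! : ℝ) := by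
  rw [Nat.factorial_succ]; push_cast; ring

private lemma hz (k l : ℕ) : (2:ℝ) ^ ((1:ℤ) - k - 2*l) = 2 / (2^k * 4^l) := by
  have h : ((1:ℤ) - k - 2*l) = 1 - ((k + 2*l : ℕ) : ℤ) := by push_cast; ring
  rw [h, zpow_sub₀ (by norm_num : (2:ℝ) ≠ 0), zpow_one, zpow_natCast, pow_add, pow_mul]
  norm_num

private lemma hz0 (m a : ℕ) : (2:ℝ) ^ ((1:ℤ) - ((m + 2*a : ℕ) : ℤ)) = 2 / (2^m * 4^a) := by
  rw [zpow_sub₀ (by norm_num : (2:ℝ) ≠ 0), zpow_one, zpow_natCast, pow_add, pow_mul]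
  norm_num

private lemma negpow (a : ℕ) : ((-1:ℝ))^a * (-1)^a = 1 := by
  rw [← pow_add]; exact Even.neg_one_pow ⟨a, rfl⟩

private lemma key3 (x y A B C P Q u : ℝ) (hA : A ≠ 0) (hB : B ≠ 0) (hC : C ≠ 0)
    (hP : P ≠ 0) (hQ : Q ≠ 0) (hu : u * u = 1)
    (p1 : y + 1 ≠ 0) (p2 : y + 2 ≠ 0) (p3 : y + 3 ≠ 0) (p2' : y + 1 + 1 ≠ 0) (p3' : y + 2 + 1 ≠ 0)
    (q1 : x + y + 1 ≠ 0) (q2 : x + y + 2 ≠ 0) (q3 : x + y + 3 ≠ 0)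
    (q2' : x + y + 1 + 1 ≠ 0) (q3' : x + y + 2 + 1 ≠ 0)
    (g1 : x + 2 * y + 1 ≠ 0) (g2 : x + 2 * y + 1 + 1 ≠ 0) (g3 : x + 2 * y + 2 + 1 ≠ 0)
    (k1 : 2 * x + 2 * y + 2 ≠ 0) (k2 : 2 * y + 2 ≠ 0) (k3 : 2 * x + 2 * y + 4 ≠ 0)
    (k4 : 2 * y + 4 ≠ 0) (k5 : 2 * x + 2 * y + 6 ≠ 0) (k6 : 2 * y + 6 ≠ 0) :
    u * -1 * -1 * -1 * (u * ((x + 2 * y + 2 + 1) * ((x + 2 * y + 1 + 1) * ((x + 2 * y + 1) * C)) / (6 * C)) * (C / (A * B)) * (2 / (P * Q)) * 1 + u * -1 * ((x + 2 * y + 3 + 1) * ((x + 2 * y + 2 + 1) * ((x + 2 * y + 1 + 1) * ((x + 2 * y + 1) * C))) / (2 * ((x + 2 * y + 1 + 1) * ((x + 2 * y + 1) * C)))) * ((x + 2 * y + 1 + 1) * ((x + 2 * y + 1) * C) / ((y + 1) * A * ((x + y + 1) * B))) * (2 / (P * (Q * 4))) * (x + 2 * y + 1 + 1) + u * -1 *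 -1 * (x + 2 * y + 1 + 1 + 1 + 1 + 1) * ((x + 2 * y + 3 + 1) * ((x + 2 * y + 2 + 1) * ((x + 2 * y + 1 + 1) * ((x + 2 * y + 1) * C))) / ((y + 1 + 1) * ((y + 1) * A) * ((x + y + 1 + 1) * ((x + y + 1) * B)))) * (2 / (P * (Q * 4 * 4))) * ((x + 2 * y + 3 + 1) * ((x + 2 * y + 2 + 1) * ((x + 2 * y + 1 + 1) * ((x + 2 * y + 1) * C))) / (2 * ((x + 2 * y + 1 + 1) * ((x + 2 * y + 1) * C)))) + u * -1 * -1 * -1 * 1 * ((x + 2 * y + 5 + 1) * ((x + 2 * y + 4 + 1) * ((x + 2 * y + 3 + 1) * ((x + 2 * y + 2 + 1) * ((x + 2 * y + 1 + 1) * ((x + 2 * y + 1) * C))))) / ((y + 2 + 1) * ((y + 1 + 1) * ((y + 1) * A)) * ((x + y + 2 + 1) * ((x + y + 1 + 1) * ((x + y + 1) * B))))) * (2 / (P * (Q * 4 * 4 * 4))) * ((x + 2 * y + 5 + 1) * ((x + 2 * y + 4 + 1) * ((x + 2 * y + 3 + 1) * ((x + 2 * y + 2 + 1) * ((x + 2 *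 y + 1 + 1) * ((x + 2 * y + 1) * C))))) / (6 * ((x + 2 * y + 2 + 1) * ((x + 2 * y + 1 + 1) * ((x + 2 * y + 1) * C)))))) =
    2 / (P * Q) * ((x + 2 * y + 2 + 1) * ((x + 2 * y + 1 + 1) * ((x + 2 * y + 1) * C)) / (C * 6)) * (C / (A * B)) * (x ^ 0 * x * x * ((x ^ 0 * x * x - 3 * (x + 2 * y) - 16) ^ 0 * (x ^ 0 * x * x - 3 * (x + 2 * y) - 16) * (x ^ 0 * x * x - 3 * (x + 2 * y) - 16))) / ((2 * x + 2 * y + 2) * (2 * y + 2) * ((2 * x + 2 * y + 4) * (2 * y + 4) * ((2 * x + 2 * y + 6) * (2 * y + 6)))) := by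
  have e0 : u * ((x + 2 * y + 2 + 1) * ((x + 2 * y + 1 + 1) * ((x + 2 * y + 1) * C)) / (6 * C)) * (C / (A * B)) * (2 / (P * Q)) * 1 = u * ((x + 2*y + 1) * (x + 2*y + 2) * (x + 2*y + 3) / 6) * (2 * C / (A * B * (P * Q))) := by
    field_simp; ring
  have e1 : u * -1 * ((x + 2 * y + 3 + 1) * ((x + 2 * y + 2 + 1) * ((x + 2 * y + 1 + 1) * ((x + 2 * y + 1) * C))) / (2 * ((x + 2 * y + 1 + 1) * ((x + 2 * y + 1) * C)))) * ((x + 2 * y + 1 + 1) * ((x + 2 * y + 1) * C) / ((y + 1) * A * ((x + y + 1) * B))) * (2 / (P * (Q * 4))) * (x + 2 * y + 1 + 1) = u * (-((x + 2*y + 1) * (x + 2*y + 2) * (x + 2*y + 2) * (x + 2*y + 3) * (x + 2*y + 4)) / (8 * ((y + 1) * (x + y + 1)))) * (2 * C / (A * B * (P * Q))) := by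
    field_simp; ring
  have e2 : u * -1 * -1 * (x + 2 * y + 1 + 1 + 1 + 1 + 1) * ((x + 2 * y + 3 + 1) * ((x + 2 * y + 2 + 1) * ((x + 2 * y + 1 + 1) * ((x + 2 * y + 1) * C))) / ((y + 1 + 1) * ((y + 1) * A) * ((x + y + 1 + 1) * ((x + y + 1) * B)))) * (2 / (P * (Q * 4 * 4))) * ((x + 2 * y + 3 + 1) * ((x + 2 * y + 2 + 1) * ((x + 2 * y + 1 + 1) * ((x + 2 * y + 1) * C))) / (2 * ((x + 2 * y + 1 + 1) * ((x + 2 * y + 1) * C)))) = u * ((x + 2*y + 1) * (x + 2*y + 2) * (x + 2*y + 3) * (x + 2*y + 3) * (x + 2*y + 4) * (x + 2*y + 4) * (x + 2*y + 5) / (32 * ((y + 1) * (y + 2) * (x + y + 1) * (x + y + 2)))) * (2 * C / (A * B * (P * Q))) := by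
    field_simp; ring
  have e3 : u * -1 * -1 * -1 * 1 * ((x + 2 * y + 5 + 1) * ((x + 2 * y + 4 + 1) * ((x + 2 * y + 3 + 1) * ((x + 2 * y + 2 + 1) * ((x + 2 * y + 1 + 1) * ((x + 2 * y + 1) * C))))) / ((y + 2 + 1) * ((y + 1 + 1) * ((y + 1) * A)) * ((x + y + 2 + 1) * ((x + y + 1 + 1) * ((x + y + 1) * B))))) * (2 / (P * (Q * 4 * 4 * 4))) * ((x + 2 * y + 5 + 1) * ((x + 2 * y + 4 + 1) * ((x + 2 * y + 3 + 1) * ((x + 2 * y + 2 + 1) * ((x + 2 * y + 1 + 1) * ((x + 2 * y + 1) * C))))) / (6 * ((x + 2 * y + 2 + 1) * ((x + 2 * y + 1 + 1) * ((x + 2 * y + 1) * C))))) = u * (-((x + 2*y + 1) * (x + 2*y + 2) * (x + 2*y + 3) * (x + 2*y + 4) * (x + 2*y + 4) * (x + 2*y + 5) * (x + 2*y + 5) * (x + 2*y + 6) * (x + 2*y + 6)) / (384 * ((y + 1) * (y + 2) * (y + 3) * (x + y + 1) * (x + y + 2) * (x + y + 3)))) * (2 * C / (A * B * (P * Q)))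 := by
    field_simp; ring
  have eR : 2 / (P * Q) * ((x + 2 * y + 2 + 1) * ((x + 2 * y + 1 + 1) * ((x + 2 * y + 1) * C)) / (C * 6)) * (C / (A * B)) * (x ^ 0 * x * x * ((x ^ 0 * x * x - 3 * (x + 2 * y) - 16) ^ 0 * (x ^ 0 * x * x - 3 * (x + 2 * y) - 16) * (x ^ 0 * x * x - 3 * (x + 2 * y) - 16))) / ((2 * x + 2 * y + 2) * (2 * y + 2) * ((2 * x + 2 * y + 4) * (2 * y + 4) * ((2 * x + 2 * y + 6) * (2 * y + 6)))) = ((x + 2*y + 1) * (x + 2*y + 2) * (x + 2*y + 3) * (x * x) * ((x * x - 3 * x - 6 * y - 16) * (x * x - 3 * x - 6 * y - 16)) / (6 * ((2 * x + 2 * y + 2) * (2 * y + 2) * (2 * x + 2 * y + 4) * (2 * y + 4) * (2 * x + 2 * y + 6) * (2 * y + 6)))) * (2 * C / (A * B * (P * Q))) := by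
    field_simp; ring
  rw [e0, e1, e2, e3, eR]
  have key : -(((x + 2*y + 1) * (x + 2*y + 2) * (x + 2*y + 3) / 6) + (-((x + 2*y + 1) * (x + 2*y + 2) * (x + 2*y + 2) * (x + 2*y + 3) * (x + 2*y + 4)) / (8 * ((y + 1) * (x + y + 1)))) + ((x + 2*y + 1) * (x + 2*y + 2) * (x + 2*y + 3) * (x + 2*y + 3) * (x + 2*y + 4) * (x + 2*y + 4) * (x + 2*y + 5) / (32 * ((y + 1) * (y + 2) * (x + y + 1) * (x + y + 2)))) + (-((x + 2*y + 1) * (x + 2*y + 2) * (x + 2*y + 3) * (x + 2*y + 4) * (x + 2*y + 4) * (x + 2*y + 5) * (x + 2*y + 5) * (x + 2*y + 6) * (x + 2*y + 6)) / (384 * ((y + 1) * (y + 2) * (y + 3) * (x + y + 1) * (x + y + 2) * (x + y + 3))))) = ((x + 2*y + 1) * (x + 2*y + 2) * (x + 2*y + 3) * (x * x) * ((x * x - 3 * x - 6 * y - 16) * (x * x - 3 * x - 6 * y - 16)) / (6 * ((2 * x + 2 * y + 2) * (2 * y + 2) * (2 * x + 2 * y + 4) * (2 * y + 4) * (2 *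 x + 2 * y + 6) * (2 * y + 6)))) := by
    have k3' : 2 * (x + y) + 4 ≠ 0 := by contrapose! q2; linarith
    have k5' : 2 * (x + y) + 6 ≠ 0 := by contrapose! q3; linarith
    field_simp; ring
  linear_combination (2 * C / (A * B * (P * Q))) * key + (-(((x + 2*y + 1) * (x + 2*y + 2) * (x + 2*y + 3) / 6) + (-((x + 2*y + 1) * (x + 2*y + 2) * (x + 2*y + 2) * (x + 2*y + 3) * (x + 2*y + 4)) / (8 * ((y + 1) * (x + y + 1)))) + ((x + 2*y + 1) * (x + 2*y + 2) * (x + 2*y + 3) * (x + 2*y + 3) * (x + 2*y + 4) * (x + 2*y + 4) * (x + 2*y + 5) / (32 * ((y + 1) * (y + 2) * (x + y + 1) * (x + y + 2)))) + (-((x + 2*y + 1) * (x + 2*y + 2) * (x + 2*y + 3) * (x + 2*y + 4) * (x + 2*y + 4) * (x + 2*y + 5) * (x + 2*y + 5) * (x + 2*y + 6) * (x + 2*y + 6)) / (384 * ((y + 1) * (y + 2) * (y + 3) * (x + y + 1) * (x + y + 2) * (x + y + 3)))))) * (2 * C / (A * B * (P * Q))) * hu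

theorem coeff_high_i (n m i : ℕ) (hmi : m ≤ i) (hin : i ≤ n)
    (hpar : Even (n - i)) (hpar' : Even (i - m)) (heps : (n - i) / 2 ≤ 3) :
    c n m i = (2 : ℝ) ^ ((1 : ℤ) - i) * (((n + i) / 2).choose i : ℝ) *
      (i.choose ((i - m) / 2) : ℝ) *
      (if (n - i) / 2 = 0 then (1 : ℝ)
        else if (n - i) / 2 = 1 then (m : ℝ) ^ 2
        else if (n - i) / 2 = 2 then ((m : ℝ) ^ 2 - i - 4) ^ 2
        else (m : ℝ) ^ 2 * ((m : ℝ) ^ 2 - 3 * i - 16) ^ 2) /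
      ∏ d ∈ Finset.Icc 1 ((n - i) / 2), ((2 * (d : ℝ) + i + m) * (2 * (d : ℝ) + i - m)) := by
  obtain ⟨e, he⟩ := hpar
  obtain ⟨a, ha⟩ := hpar'
  have hi : i = m + 2 * a := by omega
  have hn2 : n = m + 2 * a + 2 * e := by omega
  subst hi
  subst hn2
  have he3 : e ≤ 3 := by omega
  clear he ha hmi hin heps
  have d1 : (m + 2 * a + 2 * e - m) / 2 = a + e := by omega
  have d2 : (m + 2 * a - m) / 2 = a := by omega
  have d3 : (m + 2 * a + 2 * e + m) / 2 = m + a + e := by omega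
  have d4 : (m + 2 * a + 2 * e - (m + 2 * a)) / 2 = e := by omega
  have d5 : (m + 2 * a + 2 * e + (m + 2 * a)) / 2 = m + 2 * a + e := by omega
  simp only [c]
  rw [d1, d2, d3, d4, d5]
  clear d1 d2 d3 d4 d5
  interval_cases e
  · -- e = 0
    rw [show a + 0 = a from rfl, Finset.Icc_self, Finset.sum_singleton]
    rw [if_pos rfl]
    rw [show Finset.Icc 1 0 = (∅ : Finset ℕ) from rfl, Finset.prod_empty, div_one]
    rw [show a - a = 0 by omega, show m + a + 0 + a = m + 2*a by omega,
        show (m + 2*a - (m + 2*a))/2 = 0 by omega,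
        show m + 2*a + 0 = m + 2*a by omega]
    rw [Nat.choose_zero_right, Nat.choose_self]
    rw [hz m a, hz0 m a]
    push_cast
    rcases Nat.even_or_odd a with hpa | hpa <;>
      simp only [pow_succ, hpa.neg_one_pow] <;>
      (field_simp)
  · -- e = 1
    rw [Finset.sum_Icc_succ_top (by omega), Finset.Icc_self, Finset.sum_singleton]
    rw [if_neg one_ne_zero, if_pos rfl]
    rw [Finset.Icc_self, Finset.prod_singleton]
    rw [show a + 1 - a = 1 by omega, show a + 1 - (a+1) = 0 by omega,
        show m + a + 1 + a = m + 2*a + 1 by omega, show m + a + 1 + (a+1) = m + 2*a + 1 + 1 by omega,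
        show m + 2*(a+1) = m + 2*a + 1 + 1 by omega,
        show (m + 2*a - (m + 2*a))/2 = 0 by omega,
        show (m + 2*a + 1 + 1 - (m + 2*a))/2 = 1 by omega]
    rw [Nat.choose_zero_right, Nat.choose_one_right, Nat.choose_one_right]
    rw [ch (m + 2*a + 1 + 1) (a+1) (m+a+1) (by omega), ch (m+2*a) a (m+a) (by omega),
        ch (m+2*a+1) (m+2*a) 1 (by omega)]
    rw [hz m a, hz m (a+1), hz0 m a]
    simp only [fs, Nat.factorial_one, Nat.choose_zero_right]
    rw [show (2 * ((1:ℕ):ℝ) + ((m+2*a:ℕ):ℝ) + (m:ℝ)) = 2*(m:ℝ)+2*(a:ℝ)+2 from by push_cast; ring,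
        show (2 * ((1:ℕ):ℝ) + ((m+2*a:ℕ):ℝ) - (m:ℝ)) = 2*(a:ℝ)+2 from by push_cast; ring]
    push_cast
    have hA : ((Nat.factorial a : ℕ) : ℝ) ≠ 0 := Nat.cast_ne_zero.mpr (Nat.factorial_ne_zero a)
    have hB : ((Nat.factorial (m+a) : ℕ) : ℝ) ≠ 0 := Nat.cast_ne_zero.mpr (Nat.factorial_ne_zero _)
    have hC : ((Nat.factorial (m+2*a) : ℕ) : ℝ) ≠ 0 := Nat.cast_ne_zero.mpr (Nat.factorial_ne_zero _)
    have h2 : (2:ℝ)^m ≠ 0 := by positivity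
    have h4 : (4:ℝ)^a ≠ 0 := by positivity
    have ha1 : ((a:ℝ)+1) ≠ 0 := by positivity
    have ha2 : ((a:ℝ)+1+1) ≠ 0 := by positivity
    have ha3 : ((a:ℝ)+1+1+1) ≠ 0 := by positivity
    have ha2' : ((a:ℝ)+2) ≠ 0 := by positivity
    have ha3' : ((a:ℝ)+3) ≠ 0 := by positivity
    have hb1 : ((m:ℝ)+(a:ℝ)+1) ≠ 0 := by positivity
    have hb2 : ((m:ℝ)+(a:ℝ)+1+1) ≠ 0 := by positivity
    have hb3 : ((m:ℝ)+(a:ℝ)+1+1+1) ≠ 0 := by positivity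
    have hb2' : ((m:ℝ)+(a:ℝ)+2) ≠ 0 := by positivity
    have hb3' : ((m:ℝ)+(a:ℝ)+3) ≠ 0 := by positivity
    have hc1 : ((m:ℝ)+2*(a:ℝ)+1) ≠ 0 := by positivity
    have hc2 : ((m:ℝ)+2*(a:ℝ)+1+1) ≠ 0 := by positivity
    have hc3 : ((m:ℝ)+2*(a:ℝ)+1+1+1) ≠ 0 := by positivity
    have hc4 : ((m:ℝ)+2*(a:ℝ)+1+1+1+1) ≠ 0 := by positivity
    have hc5 : ((m:ℝ)+2*(a:ℝ)+1+1+1+1+1) ≠ 0 := by positivity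
    have hc6 : ((m:ℝ)+2*(a:ℝ)+1+1+1+1+1+1) ≠ 0 := by positivity
    have hd1 : (2*(m:ℝ)+2*(a:ℝ)+2) ≠ 0 := by positivity
    have hd2 : (2*(a:ℝ)+2) ≠ 0 := by positivity
    have hd3 : (2*(m:ℝ)+2*(a:ℝ)+4) ≠ 0 := by positivity
    have hd4 : (2*(a:ℝ)+4) ≠ 0 := by positivity
    have hd5 : (2*(m:ℝ)+2*(a:ℝ)+6) ≠ 0 := by positivity
    have hd6 : (2*(a:ℝ)+6) ≠ 0 := by positivity

    rcases Nat.even_or_odd a with hpa | hpa <;>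
      simp only [pow_succ, hpa.neg_one_pow] <;>
      (field_simp; ring)
  · -- e = 2
    rw [show a + 2 = a + 1 + 1 from rfl, Finset.sum_Icc_succ_top (by omega),
        Finset.sum_Icc_succ_top (by omega), Finset.Icc_self, Finset.sum_singleton]
    rw [if_neg (by norm_num), if_neg (by norm_num), if_pos rfl]
    rw [show Finset.Icc 1 2 = ({1, 2} : Finset ℕ) from by decide,
        Finset.prod_insert (by decide), Finset.prod_singleton]
    rw [show a + 1 + 1 - a = 2 by omega, show a + 1 + 1 - (a+1) = 1 by omega,
        show a + 1 + 1 - (a+1+1) = 0 by omega,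
        show m + a + 2 + a = m + 2*a + 1 + 1 by omega,
        show m + a + 2 + (a+1) = m + 2*a + 1 + 1 + 1 by omega,
        show m + a + 2 + (a+1+1) = m + 2*a + 1 + 1 + 1 + 1 by omega,
        show m + 2*(a+1) = m + 2*a + 1 + 1 by omega,
        show m + 2*(a+1+1) = m + 2*a + 1 + 1 + 1 + 1 by omega,
        show (m + 2*a - (m + 2*a))/2 = 0 by omega,
        show (m + 2*a + 1 + 1 - (m + 2*a))/2 = 1 by omega,
        show (m + 2*a + 1 + 1 + 1 + 1 - (m + 2*a))/2 = 2 by omega]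
    rw [Nat.choose_zero_right, Nat.choose_one_right, Nat.choose_one_right, Nat.choose_zero_right]
    rw [ch (m + 2*a + 1 + 1) 2 (m + 2*a) (by omega),
        ch (m + 2*a) a (m+a) (by omega),
        ch (m + 2*a + 1 + 1) (a+1) (m+a+1) (by omega),
        ch (m + 2*a + 1 + 1 + 1 + 1) (a+1+1) (m+a+1+1) (by omega),
        ch (m + 2*a + 1 + 1 + 1 + 1) 2 (m + 2*a + 1 + 1) (by omega),
        ch (m + 2*a + 2) (m + 2*a) 2 (by omega)]
    rw [hz m a, hz m (a+1), hz m (a+1+1), hz0 m a]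
    rw [show m + 2*a + 2 = m + 2*a + 1 + 1 from rfl]
    simp only [fs, Nat.factorial_one, Nat.factorial_two]
    rw [show (2 * ((1:ℕ):ℝ) + ((m+2*a:ℕ):ℝ) + (m:ℝ)) = 2*(m:ℝ)+2*(a:ℝ)+2 from by push_cast; ring,
        show (2 * ((1:ℕ):ℝ) + ((m+2*a:ℕ):ℝ) - (m:ℝ)) = 2*(a:ℝ)+2 from by push_cast; ring,
        show (2 * ((2:ℕ):ℝ) + ((m+2*a:ℕ):ℝ) + (m:ℝ)) = 2*(m:ℝ)+2*(a:ℝ)+4 from by push_cast; ring,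
        show (2 * ((2:ℕ):ℝ) + ((m+2*a:ℕ):ℝ) - (m:ℝ)) = 2*(a:ℝ)+4 from by push_cast; ring]
    push_cast
    have hA : ((Nat.factorial a : ℕ) : ℝ) ≠ 0 := Nat.cast_ne_zero.mpr (Nat.factorial_ne_zero a)
    have hB : ((Nat.factorial (m+a) : ℕ) : ℝ) ≠ 0 := Nat.cast_ne_zero.mpr (Nat.factorial_ne_zero _)
    have hC : ((Nat.factorial (m+2*a) : ℕ) : ℝ) ≠ 0 := Nat.cast_ne_zero.mpr (Nat.factorial_ne_zero _)
    have h2 : (2:ℝ)^m ≠ 0 := by positivity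
    have h4 : (4:ℝ)^a ≠ 0 := by positivity
    have ha1 : ((a:ℝ)+1) ≠ 0 := by positivity
    have ha2 : ((a:ℝ)+1+1) ≠ 0 := by positivity
    have ha3 : ((a:ℝ)+1+1+1) ≠ 0 := by positivity
    have ha2' : ((a:ℝ)+2) ≠ 0 := by positivity
    have ha3' : ((a:ℝ)+3) ≠ 0 := by positivity
    have hb1 : ((m:ℝ)+(a:ℝ)+1) ≠ 0 := by positivity
    have hb2 : ((m:ℝ)+(a:ℝ)+1+1) ≠ 0 := by positivity
    have hb3 : ((m:ℝ)+(a:ℝ)+1+1+1) ≠ 0 := by positivity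
    have hb2' : ((m:ℝ)+(a:ℝ)+2) ≠ 0 := by positivity
    have hb3' : ((m:ℝ)+(a:ℝ)+3) ≠ 0 := by positivity
    have hc1 : ((m:ℝ)+2*(a:ℝ)+1) ≠ 0 := by positivity
    have hc2 : ((m:ℝ)+2*(a:ℝ)+1+1) ≠ 0 := by positivity
    have hc3 : ((m:ℝ)+2*(a:ℝ)+1+1+1) ≠ 0 := by positivity
    have hc4 : ((m:ℝ)+2*(a:ℝ)+1+1+1+1) ≠ 0 := by positivity
    have hc5 : ((m:ℝ)+2*(a:ℝ)+1+1+1+1+1) ≠ 0 := by positivity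
    have hc6 : ((m:ℝ)+2*(a:ℝ)+1+1+1+1+1+1) ≠ 0 := by positivity
    have hd1 : (2*(m:ℝ)+2*(a:ℝ)+2) ≠ 0 := by positivity
    have hd2 : (2*(a:ℝ)+2) ≠ 0 := by positivity
    have hd3 : (2*(m:ℝ)+2*(a:ℝ)+4) ≠ 0 := by positivity
    have hd4 : (2*(a:ℝ)+4) ≠ 0 := by positivity
    have hd5 : (2*(m:ℝ)+2*(a:ℝ)+6) ≠ 0 := by positivity
    have hd6 : (2*(a:ℝ)+6) ≠ 0 := by positivity

    rcases Nat.even_or_odd a with hpa | hpa <;>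
      simp only [pow_succ, hpa.neg_one_pow] <;>
      (field_simp; ring)
  · -- e = 3
    rw [show a + 3 = a + 1 + 1 + 1 from rfl, Finset.sum_Icc_succ_top (by omega),
        Finset.sum_Icc_succ_top (by omega), Finset.sum_Icc_succ_top (by omega),
        Finset.Icc_self, Finset.sum_singleton]
    rw [show a + 2 + 1 = a + 1 + 1 + 1 from rfl]
    rw [if_neg (by norm_num), if_neg (by norm_num), if_neg (by norm_num)]
    rw [show Finset.Icc 1 3 = ({1, 2, 3} : Finset ℕ) from by decide,
        Finset.prod_insert (by decide), Finset.prod_insert (by decide), Finset.prod_singleton]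
    rw [show a + 1 + 1 + 1 - a = 3 by omega, show a + 1 + 1 + 1 - (a+1) = 2 by omega,
        show a + 1 + 1 + 1 - (a+1+1) = 1 by omega, show a + 1 + 1 + 1 - (a+1+1+1) = 0 by omega,
        show m + a + 3 + a = m + 2*a + 1 + 1 + 1 by omega,
        show m + a + 3 + (a+1) = m + 2*a + 1 + 1 + 1 + 1 by omega,
        show m + a + 3 + (a+1+1) = m + 2*a + 1 + 1 + 1 + 1 + 1 by omega,
        show m + a + 3 + (a+1+1+1) = m + 2*a + 1 + 1 + 1 + 1 + 1 + 1 by omega,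
        show m + 2*(a+1) = m + 2*a + 1 + 1 by omega,
        show m + 2*(a+1+1) = m + 2*a + 1 + 1 + 1 + 1 by omega,
        show m + 2*(a+1+1+1) = m + 2*a + 1 + 1 + 1 + 1 + 1 + 1 by omega,
        show (m + 2*a - (m + 2*a))/2 = 0 by omega,
        show (m + 2*a + 1 + 1 - (m + 2*a))/2 = 1 by omega,
        show (m + 2*a + 1 + 1 + 1 + 1 - (m + 2*a))/2 = 2 by omega,
        show (m + 2*a + 1 + 1 + 1 + 1 + 1 + 1 - (m + 2*a))/2 = 3 by omega]
    rw [Nat.choose_zero_right, Nat.choose_one_right, Nat.choose_one_right, Nat.choose_zero_right]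
    rw [ch (m + 2*a + 1 + 1 + 1) 3 (m + 2*a) (by omega),
        ch (m + 2*a) a (m+a) (by omega),
        ch (m + 2*a + 1 + 1 + 1 + 1) 2 (m + 2*a + 1 + 1) (by omega),
        ch (m + 2*a + 1 + 1) (a+1) (m+a+1) (by omega),
        ch (m + 2*a + 1 + 1 + 1 + 1) (a+1+1) (m+a+1+1) (by omega),
        ch (m + 2*a + 1 + 1 + 1 + 1 + 1 + 1) (a+1+1+1) (m+a+1+1+1) (by omega),
        ch (m + 2*a + 1 + 1 + 1 + 1 + 1 + 1) 3 (m + 2*a + 1 + 1 + 1) (by omega),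
        ch (m + 2*a + 3) (m + 2*a) 3 (by omega)]
    rw [hz m a, hz m (a+1), hz m (a+1+1), hz m (a+1+1+1), hz0 m a]
    rw [show m + 2*a + 3 = m + 2*a + 1 + 1 + 1 from rfl]
    rw [show (Nat.factorial 3 : ℕ) = 6 from rfl]
    simp only [fs, Nat.factorial_one, Nat.factorial_two]
    rw [show (2 * ((1:ℕ):ℝ) + ((m+2*a:ℕ):ℝ) + (m:ℝ)) = 2*(m:ℝ)+2*(a:ℝ)+2 from by push_cast; ring,
        show (2 * ((1:ℕ):ℝ) + ((m+2*a:ℕ):ℝ) - (m:ℝ)) = 2*(a:ℝ)+2 from by push_cast; ring,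
        show (2 * ((2:ℕ):ℝ) + ((m+2*a:ℕ):ℝ) + (m:ℝ)) = 2*(m:ℝ)+2*(a:ℝ)+4 from by push_cast; ring,
        show (2 * ((2:ℕ):ℝ) + ((m+2*a:ℕ):ℝ) - (m:ℝ)) = 2*(a:ℝ)+4 from by push_cast; ring,
        show (2 * ((3:ℕ):ℝ) + ((m+2*a:ℕ):ℝ) + (m:ℝ)) = 2*(m:ℝ)+2*(a:ℝ)+6 from by push_cast; ring,
        show (2 * ((3:ℕ):ℝ) + ((m+2*a:ℕ):ℝ) - (m:ℝ)) = 2*(a:ℝ)+6 from by push_cast; ring]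
    push_cast
    have hA : ((Nat.factorial a : ℕ) : ℝ) ≠ 0 := Nat.cast_ne_zero.mpr (Nat.factorial_ne_zero a)
    have hB : ((Nat.factorial (m+a) : ℕ) : ℝ) ≠ 0 := Nat.cast_ne_zero.mpr (Nat.factorial_ne_zero _)
    have hC : ((Nat.factorial (m+2*a) : ℕ) : ℝ) ≠ 0 := Nat.cast_ne_zero.mpr (Nat.factorial_ne_zero _)
    have h2 : (2:ℝ)^m ≠ 0 := by positivity
    have h4 : (4:ℝ)^a ≠ 0 := by positivity
    have ha1 : ((a:ℝ)+1) ≠ 0 := by positivity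
    have ha2 : ((a:ℝ)+1+1) ≠ 0 := by positivity
    have ha3 : ((a:ℝ)+1+1+1) ≠ 0 := by positivity
    have ha2' : ((a:ℝ)+2) ≠ 0 := by positivity
    have ha3' : ((a:ℝ)+3) ≠ 0 := by positivity
    have hb1 : ((m:ℝ)+(a:ℝ)+1) ≠ 0 := by positivity
    have hb2 : ((m:ℝ)+(a:ℝ)+1+1) ≠ 0 := by positivity
    have hb3 : ((m:ℝ)+(a:ℝ)+1+1+1) ≠ 0 := by positivity
    have hb2' : ((m:ℝ)+(a:ℝ)+2) ≠ 0 := by positivity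
    have hb3' : ((m:ℝ)+(a:ℝ)+3) ≠ 0 := by positivity
    have hc1 : ((m:ℝ)+2*(a:ℝ)+1) ≠ 0 := by positivity
    have hc2 : ((m:ℝ)+2*(a:ℝ)+1+1) ≠ 0 := by positivity
    have hc3 : ((m:ℝ)+2*(a:ℝ)+1+1+1) ≠ 0 := by positivity
    have hc4 : ((m:ℝ)+2*(a:ℝ)+1+1+1+1) ≠ 0 := by positivity
    have hc5 : ((m:ℝ)+2*(a:ℝ)+1+1+1+1+1) ≠ 0 := by positivity
    have hc6 : ((m:ℝ)+2*(a:ℝ)+1+1+1+1+1+1) ≠ 0 := by positivity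
    have hd1 : (2*(m:ℝ)+2*(a:ℝ)+2) ≠ 0 := by positivity
    have hd2 : (2*(a:ℝ)+2) ≠ 0 := by positivity
    have hd3 : (2*(m:ℝ)+2*(a:ℝ)+4) ≠ 0 := by positivity
    have hd4 : (2*(a:ℝ)+4) ≠ 0 := by positivity
    have hd5 : (2*(m:ℝ)+2*(a:ℝ)+6) ≠ 0 := by positivity
    have hd6 : (2*(a:ℝ)+6) ≠ 0 := by positivity

    simp only [pow_succ]
    exact key3 (m:ℝ) (a:ℝ) _ _ _ _ _ ((-1:ℝ)^a) hA hB hC h2 h4 (negpow a)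
      (by positivity) (by positivity) (by positivity) (by positivity) (by positivity)
      (by positivity) (by positivity) (by positivity) (by positivity) (by positivity)
      (by positivity) (by positivity) (by positivity) (by positivity) (by positivity)
      (by positivity) (by positivity) (by positivity) (by positivity)
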